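/- Let d ≥ 3 be an integer and γ = 4 − d − α ∈ (−1, 0) (i.e., d + α ∈ (4,5)). Define ψ(1) = ∫₀^π [ d (sin θ)^d / (2 sin(θ/2))^{d+γ} − (d−1)(sin θ)^{d−2} / (2 sin(θ/2))^{d−2+γ} ] dθ. Then ψ(1) = 2^{−γ} · (γ(d−1)/(d−γ)) · B((d−1)/2, (1−γ)/2) < 0, where B is the Beta function. -/

import Mathlib

open Real MeasureTheory
open Set intervalIntegral

/-- The real Beta function B(x,y) = Γ(x)Γ(y)/Γ(x+y). -/
noncomputable def betaFn (x y : ℝ) : ℝ :=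
  Real.Gamma x * Real.Gamma y / Real.Gamma (x + y)

lemma beta_cpow_eq (p q x : ℝ) (h0 : 0 ≤ x) (h1 : x ≤ 1) :
    (x:ℂ) ^ ((p:ℂ) - 1) * ((1:ℂ) - x) ^ ((q:ℂ) - 1)
      = ((x ^ (p-1) * (1-x) ^ (q-1) : ℝ) : ℂ) := by
  rw [show ((p:ℂ) - 1) = ((p - 1 : ℝ) : ℂ) by push_cast; ring,
      show ((q:ℂ) - 1) = ((q - 1 : ℝ) : ℂ) by push_cast; ring,
      show ((1:ℂ) - x) = ((1 - x : ℝ) : ℂ) by push_cast; ring,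
      ← Complex.ofReal_cpow h0, ← Complex.ofReal_cpow (by linarith), ← Complex.ofReal_mul]

lemma beta_integrableOn (p q : ℝ) (hp : 0 < p) (hq : 0 < q) :
    IntegrableOn (fun x : ℝ => x ^ (p-1) * (1-x) ^ (q-1)) (Icc (0:ℝ) 1) := by
  rw [integrableOn_Icc_iff_integrableOn_Ioc]
  have h := Complex.betaIntegral_convergent (u := p) (v := q) (by simpa) (by simpa)
  have h2 : IntegrableOn
      (fun x : ℝ => ((x:ℂ) ^ ((p:ℂ) - 1) * ((1:ℂ) - x) ^ ((q:ℂ) - 1)).re) (Ioc (0:ℝ) 1) := h.1.re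
  exact h2.congr_fun (fun x hx => by
    dsimp only
    rw [beta_cpow_eq p q x hx.1.le hx.2, Complex.ofReal_re]) measurableSet_Ioc

lemma beta_integral (p q : ℝ) (hp : 0 < p) (hq : 0 < q) :
    ∫ x in (0:ℝ)..1, x ^ (p-1) * (1-x) ^ (q-1) = betaFn p q := by
  have hc : Complex.betaIntegral p q
      = ((∫ x in (0:ℝ)..1, x ^ (p-1) * (1-x) ^ (q-1) : ℝ) : ℂ) := by
    rw [Complex.betaIntegral, ← intervalIntegral.integral_ofReal]
    refine intervalIntegral.integral_congr fun x hx => ?_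
    rw [uIcc_of_le zero_le_one] at hx
    exact beta_cpow_eq p q x hx.1 hx.2
  have hG := Complex.Gamma_mul_Gamma_eq_betaIntegral (s := p) (t := q) (by simpa) (by simpa)
  rw [hc] at hG
  have : ((Real.Gamma p * Real.Gamma q : ℝ) : ℂ)
      = ((Real.Gamma (p+q) * ∫ x in (0:ℝ)..1, x ^ (p-1) * (1-x) ^ (q-1) : ℝ) : ℂ) := by
    push_cast [← Complex.Gamma_ofReal]
    simpa using hG
  have h2 := Complex.ofReal_injective this
  have hΓ : Real.Gamma (p+q) ≠ 0 := (Real.Gamma_pos_of_pos (by linarith)).ne'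
  rw [betaFn]
  field_simp
  linarith [h2]

lemma trig_beta (c : ℝ) (hc0 : 0 < c) (hc1 : c < 1) (n : ℕ) (hn : 2 ≤ n) :
    ∫ u in (0:ℝ)..(π/2), Real.sin u ^ c * Real.cos u ^ n
      = (1/2) * betaFn ((c+1)/2) (((n:ℝ)+1)/2) := by
  set p : ℝ := (c+1)/2 with hp_def
  set q : ℝ := ((n:ℝ)+1)/2 with hq_def
  have hp : 0 < p := by rw [hp_def]; positivity
  have hq : 0 < q := by rw [hq_def]; positivity
  set g : ℝ → ℝ := fun x => x ^ (p-1) * (1-x) ^ (q-1) with hg_def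
  set f : ℝ → ℝ := fun u => Real.sin u ^ 2 with hf_def
  set f' : ℝ → ℝ := fun u => 2 * Real.sin u * Real.cos u with hf'_def
  have hpi : (0:ℝ) ≤ π/2 := by positivity
  have huIcc : uIcc (0:ℝ) (π/2) = Icc 0 (π/2) := uIcc_of_le hpi
  -- the key pointwise identity
  have hEq : EqOn (fun u => f' u • g (f u))
      (fun u => 2 * (Real.sin u ^ c * Real.cos u ^ n)) (uIcc (0:ℝ) (π/2)) := by
    rw [huIcc]
    intro u hu
    obtain ⟨h0, h1⟩ := hu
    have hs0 : 0 ≤ Real.sin u := Real.sin_nonneg_of_nonneg_of_le_pi h0 (by linarith [pi_pos])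
    have hc0' : 0 ≤ Real.cos u := Real.cos_nonneg_of_mem_Icc ⟨by linarith [pi_pos], h1⟩
    simp only [smul_eq_mul, hg_def, hf_def, hf'_def]
    rcases eq_or_lt_of_le hs0 with hs | hs
    · rw [← hs, Real.zero_rpow hc0.ne']; ring
    rcases eq_or_lt_of_le hc0' with hcz | hcz
    · rw [← hcz, zero_pow (by omega)]; ring
    have h1s : 1 - Real.sin u ^ 2 = Real.cos u ^ 2 := by
      have := Real.sin_sq_add_cos_sq u; linarith
    rw [h1s]
    have e1 : (Real.sin u ^ 2) ^ (p - 1) = Real.sin u ^ (c - 1) := by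
      rw [← Real.rpow_natCast (Real.sin u) 2, ← Real.rpow_mul hs.le]
      norm_num [hp_def]; ring_nf
    have e2 : (Real.cos u ^ 2) ^ (q - 1) = Real.cos u ^ (n - 2 + 1 : ℕ) := by
      rw [← Real.rpow_natCast (Real.cos u) 2, ← Real.rpow_mul hcz.le,
        ← Real.rpow_natCast (Real.cos u) (n - 2 + 1)]
      congr 1
      rw [hq_def]
      push_cast [Nat.cast_sub hn]
      ring
    rw [e1, e2]
    have e3 : Real.sin u * Real.sin u ^ (c - 1) = Real.sin u ^ c := by
      nth_rewrite 1 [← Real.rpow_one (Real.sin u)]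
      rw [← Real.rpow_add hs]; ring_nf
    have e4 : Real.cos u * Real.cos u ^ (n - 2 + 1 : ℕ) = Real.cos u ^ n := by
      rw [← pow_succ']; congr 1; omega
    calc 2 * Real.sin u * Real.cos u * (Real.sin u ^ (c-1) * Real.cos u ^ (n-2+1:ℕ))
        = 2 * ((Real.sin u * Real.sin u ^ (c-1)) * (Real.cos u * Real.cos u ^ (n-2+1:ℕ))) := by
          ring
      _ = 2 * (Real.sin u ^ c * Real.cos u ^ n) := by rw [e3, e4]
  -- image facts
  have himg1 : f '' Ioo (0:ℝ) (π/2) ⊆ Ioo (0:ℝ) 1 := by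
    rintro _ ⟨u, ⟨hu0, hu1⟩, rfl⟩
    have hs : 0 < Real.sin u := Real.sin_pos_of_pos_of_lt_pi hu0 (by linarith [pi_pos])
    have hcz : 0 < Real.cos u := Real.cos_pos_of_mem_Ioo ⟨by linarith [pi_pos], hu1⟩
    simp only [hf_def]
    constructor
    · positivity
    · nlinarith [Real.sin_sq_add_cos_sq u]
  have himg2 : f '' uIcc (0:ℝ) (π/2) ⊆ Icc (0:ℝ) 1 := by
    rintro _ ⟨u, hu, rfl⟩
    simp only [hf_def]
    exact ⟨sq_nonneg _, by nlinarith [Real.sin_sq_add_cos_sq u, sq_nonneg (Real.cos u)]⟩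
  have hcont : Continuous fun u => 2 * (Real.sin u ^ c * Real.cos u ^ n) :=
    continuous_const.mul ((Real.continuous_sin.rpow_const
      fun x => Or.inr hc0.le).mul (Real.continuous_cos.pow n))
  have key := intervalIntegral.integral_comp_smul_deriv''' (a := (0:ℝ)) (b := π/2)
    (f := f) (f' := f') (g := g)
    (by fun_prop)
    (fun x hx => by
      have := (Real.hasDerivAt_sin x).pow 2
      exact this.hasDerivWithinAt.congr_deriv (by norm_num [hf'_def, mul_comm, mul_assoc, mul_left_comm]))
    (by
      rw [min_eq_left hpi, max_eq_right hpi]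
      refine ContinuousOn.mono ?_ himg1
      exact (continuousOn_id.rpow_const fun x hx => Or.inl hx.1.ne').mul
        ((continuousOn_const.sub continuousOn_id).rpow_const
          fun x hx => Or.inl (by show (1:ℝ) - x ≠ 0; intro h; have := hx.2; linarith))
      )
    ((beta_integrableOn p q hp hq).mono_set himg2)
    (by
      rw [huIcc]
      refine (hcont.integrableOn_Icc (a := 0) (b := π/2)).congr_fun ?_ measurableSet_Icc
      intro x hx
      exact (hEq (by rw [huIcc]; exact hx)).symm)
  simp only [Function.comp_def] at key
  rw [intervalIntegral.integral_congr hEq, intervalIntegral.integral_const_mul] at key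
  have hf0 : f 0 = 0 := by simp [hf_def]
  have hf1 : f (π/2) = 1 := by simp [hf_def]
  rw [hf0, hf1, beta_integral p q hp hq] at key
  linarith

theorem stmt9 (d : ℕ) (hd : 3 ≤ d) (γ : ℝ) (hγ1 : -1 < γ) (hγ2 : γ < 0) :
    (∫ θ in (0:ℝ)..Real.pi,
        ((d : ℝ) * (Real.sin θ) ^ d / (2 * Real.sin (θ / 2)) ^ ((d : ℝ) + γ)
          - ((d : ℝ) - 1) * (Real.sin θ) ^ (d - 2) /
              (2 * Real.sin (θ / 2)) ^ ((d : ℝ) - 2 + γ)))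
      = (2:ℝ) ^ (-γ) * (γ * ((d : ℝ) - 1) / ((d : ℝ) - γ)) *
          betaFn (((d : ℝ) - 1) / 2) ((1 - γ) / 2) ∧
    (2:ℝ) ^ (-γ) * (γ * ((d : ℝ) - 1) / ((d : ℝ) - γ)) *
          betaFn (((d : ℝ) - 1) / 2) ((1 - γ) / 2) < 0 := by
  have hd1 : (1:ℝ) ≤ (d:ℝ) - 1 := by
    have : (3:ℝ) ≤ (d:ℝ) := by exact_mod_cast hd
    linarith
  have hdγ : 0 < (d:ℝ) - γ := by linarith
  have hdcast : ((d - 2 : ℕ) : ℝ) = (d:ℝ) - 2 := by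
    have := Nat.cast_sub (by omega : 2 ≤ d) (R := ℝ); simpa using this
  -- the half-angle function
  set F : ℝ → ℝ := fun u => (2:ℝ)^(-γ) *
      ((d:ℝ) * Real.cos u ^ d * Real.sin u ^ (-γ)
        - ((d:ℝ) - 1) * Real.cos u ^ (d-2) * Real.sin u ^ (-γ)) with hF_def
  -- Step 1: integrand equals F (θ/2)
  have step1 : EqOn (fun θ : ℝ =>
        ((d : ℝ) * (Real.sin θ) ^ d / (2 * Real.sin (θ / 2)) ^ ((d : ℝ) + γ)
          - ((d : ℝ) - 1) * (Real.sin θ) ^ (d - 2) /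
              (2 * Real.sin (θ / 2)) ^ ((d : ℝ) - 2 + γ)))
      (fun θ => F (θ/2)) (uIcc (0:ℝ) π) := by
    rw [uIcc_of_le pi_pos.le]
    intro θ ⟨h0, h1⟩
    have hu0 : 0 ≤ θ/2 := by linarith
    have hu1 : θ/2 ≤ π/2 := by linarith
    have hs0 : 0 ≤ Real.sin (θ/2) := Real.sin_nonneg_of_nonneg_of_le_pi hu0 (by linarith [pi_pos])
    have hc0 : 0 ≤ Real.cos (θ/2) := Real.cos_nonneg_of_mem_Icc ⟨by linarith [pi_pos], hu1⟩
    have hsinθ : Real.sin θ = 2 * Real.sin (θ/2) * Real.cos (θ/2) := by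
      nth_rewrite 1 [show θ = 2*(θ/2) by ring]
      rw [Real.sin_two_mul]
    simp only [hF_def]
    rcases eq_or_lt_of_le hs0 with hs | hs
    · rw [hsinθ, ← hs]
      rw [Real.zero_rpow (by linarith : -γ ≠ 0)]
      simp [zero_pow (by omega : d ≠ 0), zero_pow (by omega : d - 2 ≠ 0)]
    rcases eq_or_lt_of_le hc0 with hc | hc
    · rw [hsinθ, ← hc]
      simp [zero_pow (by omega : d ≠ 0), zero_pow (by omega : d - 2 ≠ 0)]
    -- positive case
    have h2s : 0 < 2 * Real.sin (θ/2) := by linarith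
    have e1 : (Real.sin θ)^d = (2*Real.sin (θ/2))^((d:ℕ):ℝ) * Real.cos (θ/2)^d := by
      rw [hsinθ, mul_pow, Real.rpow_natCast]
    have e2 : (Real.sin θ)^(d-2) = (2*Real.sin (θ/2))^(((d-2:ℕ)):ℝ) * Real.cos (θ/2)^(d-2) := by
      rw [hsinθ, mul_pow, Real.rpow_natCast]
    have key1 : (2*Real.sin (θ/2))^((d:ℕ):ℝ) / (2*Real.sin (θ/2))^((d:ℝ)+γ)
        = (2:ℝ)^(-γ) * Real.sin (θ/2) ^ (-γ) := by
      rw [← Real.rpow_sub h2s, show ((d:ℕ):ℝ) - ((d:ℝ)+γ) = -γ by push_cast; ring,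
        Real.mul_rpow (by norm_num) hs.le]
    have key2 : (2*Real.sin (θ/2))^(((d-2:ℕ)):ℝ) / (2*Real.sin (θ/2))^((d:ℝ)-2+γ)
        = (2:ℝ)^(-γ) * Real.sin (θ/2) ^ (-γ) := by
      rw [← Real.rpow_sub h2s, show ((d-2:ℕ):ℝ) - ((d:ℝ)-2+γ) = -γ by rw [hdcast]; ring,
        Real.mul_rpow (by norm_num) hs.le]
    rw [e1, e2]
    rw [show (d:ℝ) * ((2*Real.sin (θ/2))^((d:ℕ):ℝ) * Real.cos (θ/2)^d) / (2*Real.sin (θ/2))^((d:ℝ)+γ)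
        = (d:ℝ) * Real.cos (θ/2)^d * ((2*Real.sin (θ/2))^((d:ℕ):ℝ) / (2*Real.sin (θ/2))^((d:ℝ)+γ)) by ring,
      show ((d:ℝ)-1) * ((2*Real.sin (θ/2))^(((d-2:ℕ)):ℝ) * Real.cos (θ/2)^(d-2)) / (2*Real.sin (θ/2))^((d:ℝ)-2+γ)
        = ((d:ℝ)-1) * Real.cos (θ/2)^(d-2) * ((2*Real.sin (θ/2))^(((d-2:ℕ)):ℝ) / (2*Real.sin (θ/2))^((d:ℝ)-2+γ)) by ring,
      key1, key2]
    ring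
  rw [intervalIntegral.integral_congr step1]
  -- Step 2: substitution θ = 2u
  have step2 : (∫ θ in (0:ℝ)..π, F (θ/2)) = (2:ℝ) • ∫ u in (0:ℝ)..(π/2), F u := by
    rw [intervalIntegral.integral_comp_div (f := F) (c := (2:ℝ)) two_ne_zero]
    norm_num
  rw [step2]
  -- continuity facts
  have hγpos : (0:ℝ) < -γ := by linarith
  have hsinc : Continuous fun u : ℝ => Real.sin u ^ (-γ) :=
    Real.continuous_sin.rpow_const fun x => Or.inr hγpos.le
  set S : ℝ → ℝ := fun u => Real.sin u ^ (-γ) * Real.cos u ^ d with hS_def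
  set E : ℝ → ℝ := fun u => ((d:ℝ) - γ) * Real.cos u ^ d * Real.sin u ^ (-γ)
      - ((d:ℝ) - 1) * Real.cos u ^ (d-2) * Real.sin u ^ (-γ) with hE_def
  have hScont : Continuous S := hsinc.mul (Real.continuous_cos.pow d)
  have hEcont : Continuous E := by
    apply Continuous.sub
    · exact (continuous_const.mul (Real.continuous_cos.pow d)).mul hsinc
    · exact (continuous_const.mul (Real.continuous_cos.pow (d-2))).mul hsinc
  -- FTC: ∫ E = 0
  set G : ℝ → ℝ := fun u => Real.cos u ^ (d-1) * Real.sin u ^ (1-γ) with hG_def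
  have hderiv : ∀ u ∈ uIcc (0:ℝ) (π/2), HasDerivAt G (E u) u := by
    intro u hu
    rw [uIcc_of_le (by positivity)] at hu
    have hsin0 : 0 ≤ Real.sin u :=
      Real.sin_nonneg_of_nonneg_of_le_pi hu.1 (by linarith [pi_pos, hu.2])
    have h1 : HasDerivAt (fun v => Real.sin v ^ (1-γ))
        ((1-γ) * Real.sin u ^ (1-γ-1) * Real.cos u) u := by
      have hx := Real.hasDerivAt_rpow_const (x := Real.sin u) (p := 1-γ)
        (Or.inr (by linarith))
      exact hx.comp u (Real.hasDerivAt_sin u)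
    have h2 : HasDerivAt (fun v => Real.cos v ^ (d-1))
        (((d-1:ℕ):ℝ) * Real.cos u ^ (d-1-1) * (-Real.sin u)) u :=
      (Real.hasDerivAt_cos u).pow (d-1)
    have h3 := h2.mul h1
    refine h3.congr_deriv (Eq.symm ?_)
    rw [show d-1-1 = d-2 by omega, show (1-γ-1) = -γ by ring,
      show ((d-1:ℕ):ℝ) = (d:ℝ)-1 by push_cast [Nat.cast_sub (by omega : 1 ≤ d)]; ring]
    have hkey : Real.sin u * Real.sin u ^ (1-γ) = (1 - Real.cos u^2) * Real.sin u ^ (-γ) := by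
      rcases eq_or_lt_of_le hsin0 with hs | hs
      · rw [← hs, Real.zero_rpow (by linarith : (1:ℝ)-γ ≠ 0),
          Real.zero_rpow (by linarith : -γ ≠ 0)]
        ring
      · have hsq : 1 - Real.cos u^2 = Real.sin u ^ (2:ℕ) := by
          have := Real.sin_sq_add_cos_sq u; linarith
        rw [hsq, ← Real.rpow_natCast (Real.sin u) 2, ← Real.rpow_add hs]
        nth_rewrite 1 [← Real.rpow_one (Real.sin u)]
        rw [← Real.rpow_add hs]
        congr 1; ring
    have hpow1 : Real.cos u ^ (d-1) * Real.cos u = Real.cos u ^ d := by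
      rw [← pow_succ]; congr 1; omega
    have hpow2 : Real.cos u ^ (d-2) * Real.cos u ^ (2:ℕ) = Real.cos u ^ d := by
      rw [← pow_add]; congr 1; omega
    simp only [hE_def]
    linear_combination (((d:ℝ)-1) * Real.cos u ^ (d-2)) * hkey
      + ((γ-1) * Real.sin u ^ (-γ)) * hpow1
      + (-((d:ℝ)-1) * Real.sin u ^ (-γ)) * hpow2
  have hEint : (∫ u in (0:ℝ)..(π/2), E u) = 0 := by
    rw [intervalIntegral.integral_eq_sub_of_hasDerivAt hderiv
      (hEcont.intervalIntegrable _ _)]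
    simp only [hG_def]
    rw [Real.cos_pi_div_two, Real.sin_zero, Real.cos_zero,
      Real.zero_rpow (by linarith : (1:ℝ)-γ ≠ 0), zero_pow (by omega : d-1 ≠ 0)]
    ring
  -- split F
  have hFsplit : F = fun u => (2:ℝ)^(-γ) * E u + ((2:ℝ)^(-γ) * γ) * S u := by
    funext u
    simp only [hF_def, hE_def, hS_def]
    ring
  rw [hFsplit, intervalIntegral.integral_add
      ((hEcont.intervalIntegrable _ _).const_mul _)
      ((hScont.intervalIntegrable _ _).const_mul _),
    intervalIntegral.integral_const_mul, intervalIntegral.integral_const_mul, hEint]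
  have htb : (∫ u in (0:ℝ)..(π/2), S u)
      = (1/2) * betaFn ((-γ+1)/2) (((d:ℝ)+1)/2) := by
    simp only [hS_def]
    exact trig_beta (-γ) hγpos (by linarith) d (by omega)
  rw [htb]
  -- Gamma arithmetic
  have hbs : betaFn ((-γ+1)/2) (((d:ℝ)+1)/2)
      = (((d:ℝ)-1)/((d:ℝ)-γ)) * betaFn (((d:ℝ)-1)/2) ((1-γ)/2) := by
    have ha : (0:ℝ) < ((d:ℝ)-1)/2 := by linarith
    have hb : (0:ℝ) < (1-γ)/2 := by linarith
    have e : ((-γ:ℝ)+1)/2 = (1-γ)/2 := by ring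
    have e2 : (((d:ℝ))+1)/2 = ((d:ℝ)-1)/2 + 1 := by ring
    rw [e, e2]
    unfold betaFn
    rw [Real.Gamma_add_one (ne_of_gt ha),
      show (1-γ)/2 + (((d:ℝ)-1)/2 + 1) = (((d:ℝ)-1)/2 + (1-γ)/2) + 1 by ring,
      Real.Gamma_add_one (by positivity : ((d:ℝ)-1)/2 + (1-γ)/2 ≠ 0)]
    have h1 : Real.Gamma (((d:ℝ)-1)/2 + (1-γ)/2) ≠ 0 :=
      (Real.Gamma_pos_of_pos (by linarith)).ne'
    have h2 : ((d:ℝ)-1)/2 + (1-γ)/2 ≠ 0 := by positivity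
    have h3 : (d:ℝ) - γ ≠ 0 := ne_of_gt hdγ
    field_simp
    rw [show (d:ℝ) - 1 + (1 - γ) = (d:ℝ) - γ by ring, div_mul_cancel_left₀ h3, one_div]
  constructor
  · rw [hbs]
    simp only [smul_eq_mul]
    ring
  · have hbpos : 0 < betaFn (((d:ℝ)-1)/2) ((1-γ)/2) := by
      unfold betaFn
      apply div_pos
      · exact mul_pos (Real.Gamma_pos_of_pos (by linarith)) (Real.Gamma_pos_of_pos (by linarith))
      · exact Real.Gamma_pos_of_pos (by linarith)
    have hneg : γ * ((d:ℝ)-1) / ((d:ℝ)-γ) < 0 :=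
      div_neg_of_neg_of_pos (mul_neg_of_neg_of_pos hγ2 (by linarith)) hdγ
    have h2pos : (0:ℝ) < (2:ℝ)^(-γ) := Real.rpow_pos_of_pos (by norm_num) _
    exact mul_neg_of_neg_of_pos (mul_neg_of_pos_of_neg h2pos hneg) hbpos
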